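/- Let μ ≥ 0 be a real number, ν > 0 a real number, k ∈ ℕ, and f ∈ L¹(𝔻, dι) (complex-valued). Then ∑_{i=0}^{k} C(k,i)² · (i!/(ν)_i) · ∫_{𝔻} f(v)·|v|^{2(k−i)}·(1−|v|²)^μ dι(v) = ∑_{j=0}^{k} (−1)^j · C(k,j) · ((ν+k−j)_k/(ν)_k) · ∫_{𝔻} f(v)·(1−|v|²)^{μ+j} dι(v), where C(·,·) denotes binomial coefficients. -/

import Mathlib

open MeasureTheory Complex Filter

/-- The open unit disk in `ℂ`. -/
def unitDisk : Set ℂ := {z : ℂ | ‖z‖ < 1}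

/-- The `SU(1,1)`-invariant measure `ι` on the unit disk, `dι(z) = dA(z)/(π(1−|z|²)²)`. -/
noncomputable def iota : Measure ℂ :=
  (volume.restrict unitDisk).withDensity
    (fun z => ENNReal.ofReal (1 / (Real.pi * (1 - ‖z‖ ^ 2) ^ 2)))

instance : SigmaFinite iota := SigmaFinite.withDensity_ofReal _

/-- The Pochhammer symbol `(a)_n = a(a+1)⋯(a+n-1)` for a real number `a`. -/
noncomputable def poch (a : ℝ) (n : ℕ) : ℝ := ∏ i ∈ Finset.range n, (a + i)

lemma poch_succ (a : ℝ) (n : ℕ) : poch a (n+1) = poch a n * (a + n) := Finset.prod_range_succ _ _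

lemma poch_succ' (a : ℝ) (n : ℕ) : poch a (n+1) = a * poch (a+1) n := by
  rw [poch, Finset.prod_range_succ']
  simp only [Nat.cast_zero, add_zero, mul_comm]
  congr 1
  apply Finset.prod_congr rfl
  intro i _
  push_cast; ring

lemma poch_step (y : ℝ) (k : ℕ) :
    poch y (k+1) + ((k:ℝ)+1) * poch (y+1) k = poch (y+1) (k+1) := by
  rw [poch_succ', poch_succ]; ring

lemma key (k : ℕ) : ∀ (n : ℕ) (x : ℝ),
    ∑ i ∈ Finset.range (n+1), (k.choose i : ℝ) * (n.choose i : ℝ) * (i.factorial : ℝ)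
      * poch (x + i) (k - i) = poch (x + n) k := by
  induction k with
  | zero =>
    intro n x
    rw [Finset.sum_eq_single 0]
    · simp [poch]
    · intro i _ hi
      rcases Nat.exists_eq_succ_of_ne_zero hi with ⟨m, rfl⟩
      simp
    · simp
  | succ k ih =>
    intro n x
    induction n with
    | zero => simp [Nat.choose]
    | succ n ihn =>
      have hD : ∑ i ∈ Finset.range (n+1), (Nat.choose (k+1) (i+1) : ℝ) * (n.choose i : ℝ)
          * ((i+1).factorial : ℝ) * poch (x + ((i:ℕ)+1 : ℕ)) (k + 1 - (i+1))
          = ((k:ℝ)+1) * poch ((x+1) + n) k := by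
        rw [← ih n (x+1), Finset.mul_sum]
        apply Finset.sum_congr rfl
        intro i _
        have h1 : (k+1) * k.choose i = Nat.choose (k+1) (i+1) * (i+1) := by
          rw [← Nat.add_one_mul_choose_eq]
        have h2 : ((Nat.choose (k+1) (i+1) : ℝ)) * ((i+1).factorial : ℝ)
            = ((k:ℝ)+1) * (k.choose i : ℝ) * (i.factorial : ℝ) := by
          have h1' : ((k:ℝ)+1) * (k.choose i : ℝ) = (Nat.choose (k+1) (i+1) : ℝ) * ((i:ℝ)+1) := by
            exact_mod_cast congrArg (fun m : ℕ => (m : ℝ)) h1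
          rw [Nat.factorial_succ]
          push_cast
          nlinarith [h1']
        have h3 : k + 1 - (i + 1) = k - i := by omega
        have h4 : x + (((i:ℕ)+1 : ℕ) : ℝ) = (x + 1) + (i:ℝ) := by push_cast; ring
        rw [h3, h4]
        linear_combination ((n.choose i : ℝ) * poch (x + 1 + (i:ℝ)) (k-i)) * h2
      rw [Finset.sum_range_succ']
      have split : ∑ i ∈ Finset.range (n+1), (Nat.choose (k+1) (i+1) : ℝ) * ((n+1).choose (i+1) : ℝ)
          * ((i+1).factorial : ℝ) * poch (x + ((i:ℕ)+1:ℕ)) (k + 1 - (i+1))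
          = (∑ i ∈ Finset.range (n+1), (Nat.choose (k+1) (i+1) : ℝ) * (n.choose (i+1) : ℝ)
            * ((i+1).factorial : ℝ) * poch (x + ((i:ℕ)+1:ℕ)) (k + 1 - (i+1)))
          + ∑ i ∈ Finset.range (n+1), (Nat.choose (k+1) (i+1) : ℝ) * (n.choose i : ℝ)
            * ((i+1).factorial : ℝ) * poch (x + ((i:ℕ)+1:ℕ)) (k + 1 - (i+1)) := by
        rw [← Finset.sum_add_distrib]
        apply Finset.sum_congr rfl
        intro i _
        rw [Nat.choose_succ_succ n i]
        push_cast
        ring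
      rw [split, hD]
      have htop : ∑ i ∈ Finset.range (n+1), (Nat.choose (k+1) (i+1) : ℝ) * (n.choose (i+1) : ℝ)
            * ((i+1).factorial : ℝ) * poch (x + ((i:ℕ)+1:ℕ)) (k + 1 - (i+1))
          = ∑ i ∈ Finset.range n, (Nat.choose (k+1) (i+1) : ℝ) * (n.choose (i+1) : ℝ)
            * ((i+1).factorial : ℝ) * poch (x + ((i:ℕ)+1:ℕ)) (k + 1 - (i+1)) := by
        rw [Finset.sum_range_succ, Nat.choose_succ_self]
        simp
      rw [htop]
      have hS : (∑ i ∈ Finset.range n, (Nat.choose (k+1) (i+1) : ℝ) * (n.choose (i+1) : ℝ)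
            * ((i+1).factorial : ℝ) * poch (x + ((i:ℕ)+1:ℕ)) (k + 1 - (i+1)))
          + (Nat.choose (k+1) 0 : ℝ) * ((n+1).choose 0 : ℝ) * (Nat.factorial 0 : ℝ) * poch (x + ((0:ℕ):ℝ)) (k+1-0)
          = poch (x + n) (k+1) := by
        rw [← ihn, Finset.sum_range_succ']
        simp
      have hre : poch ((x+1) + (n:ℝ)) k = poch ((x + (n:ℝ)) + 1) k := by ring_nf
      have hfin : x + (((n:ℕ)+1 : ℕ) : ℝ) = (x + (n:ℝ)) + 1 := by push_cast; ring
      calc ∑ i ∈ Finset.range n, (Nat.choose (k+1) (i+1) : ℝ) * (n.choose (i+1) : ℝ)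
            * ((i+1).factorial : ℝ) * poch (x + ((i:ℕ)+1:ℕ)) (k + 1 - (i+1))
            + ((k:ℝ)+1) * poch ((x+1) + n) k
            + (Nat.choose (k+1) 0 : ℝ) * ((n+1).choose 0 : ℝ) * (Nat.factorial 0 : ℝ) * poch (x + ((0:ℕ):ℝ)) (k+1-0)
          = poch (x + n) (k+1) + ((k:ℝ)+1) * poch ((x + (n:ℝ)) + 1) k := by
            rw [← hS, ← hre]; ring
        _ = poch (x + (((n:ℕ)+1 : ℕ) : ℝ)) (k+1) := by rw [poch_step, hfin]

lemma poch_pos {ν : ℝ} (hν : 0 < ν) (n : ℕ) : 0 < poch ν n :=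
  Finset.prod_pos (fun i _ => by positivity)

lemma poch_add (a : ℝ) (m n : ℕ) : poch a (m + n) = poch a m * poch (a + m) n := by
  rw [poch, Finset.prod_range_add, poch, poch]
  congr 1
  apply Finset.prod_congr rfl
  intro i _
  push_cast; ring

lemma poch_split {i k : ℕ} (h : i ≤ k) (ν : ℝ) :
    poch ν k = poch ν i * poch (ν + i) (k - i) := by
  rw [← poch_add]
  congr 1
  omega

lemma choose_swap {k i j : ℕ} (hi : i ≤ k) (hj : j ≤ k) :
    k.choose i * (k-i).choose j = k.choose j * (k-j).choose i := by
  rcases le_or_gt j (k - i) with h | h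
  · have h1 := Nat.choose_mul (n := k) h
    rw [Nat.choose_symm hi] at h1
    rw [h1]
    congr 1
    have h2 : k - i - j = (k - j) - i := by omega
    rw [h2, Nat.choose_symm (by omega : i ≤ k - j)]
  · rw [Nat.choose_eq_zero_of_lt h, Nat.choose_eq_zero_of_lt (by omega : k - j < i)]
    simp

lemma scalar_identity (ν : ℝ) (hν : 0 < ν) (k j : ℕ) (hj : j ≤ k) :
    ∑ i ∈ Finset.range (k+1),
      (k.choose i : ℝ)^2 * ((i.factorial : ℝ) / poch ν i) * ((k-i).choose j : ℝ)
      = (k.choose j : ℝ) * (poch (ν + k - j) k / poch ν k) := by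
  have hstep : ∀ i ∈ Finset.range (k+1),
      (k.choose i : ℝ)^2 * ((i.factorial : ℝ) / poch ν i) * ((k-i).choose j : ℝ)
      = (k.choose j : ℝ) / poch ν k *
        ((k.choose i : ℝ) * ((k-j).choose i : ℝ) * (i.factorial : ℝ) * poch (ν + i) (k - i)) := by
    intro i hi
    have hi' : i ≤ k := by
      have := Finset.mem_range.mp hi; omega
    have hsplit := poch_split hi' ν
    have hswap : (k.choose i : ℝ) * ((k-i).choose j : ℝ)
        = (k.choose j : ℝ) * ((k-j).choose i : ℝ) := by
      exact_mod_cast congrArg (fun m : ℕ => (m : ℝ)) (choose_swap hi' hj)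
    have h1 : poch ν i ≠ 0 := (poch_pos hν i).ne'
    have h2 : poch ν k ≠ 0 := (poch_pos hν k).ne'
    field_simp
    rw [hsplit]
    linear_combination ((k.choose i : ℝ) * poch ν i * poch (ν + (i:ℝ)) (k - i)) * hswap
  rw [Finset.sum_congr rfl hstep, ← Finset.mul_sum]
  have hsub : ∑ i ∈ Finset.range (k+1),
      (k.choose i : ℝ) * ((k-j).choose i : ℝ) * (i.factorial : ℝ) * poch (ν + i) (k - i)
      = ∑ i ∈ Finset.range ((k-j)+1),
      (k.choose i : ℝ) * ((k-j).choose i : ℝ) * (i.factorial : ℝ) * poch (ν + i) (k - i) := by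
    symm
    apply Finset.sum_subset
    · intro x hx
      simp only [Finset.mem_range] at *
      omega
    · intro x _ hx
      simp only [Finset.mem_range, not_lt] at hx
      rw [Nat.choose_eq_zero_of_lt (by omega : k - j < x)]
      simp
  rw [hsub, key k (k-j) ν]
  have : ν + ((k - j : ℕ) : ℝ) = ν + k - j := by
    rw [Nat.cast_sub hj]; ring
  rw [this]
  ring

lemma real_expand (μ : ℝ) (m M : ℕ) (hmM : m ≤ M) (t : ℝ) (ht : 0 < t) :
    (1-t)^m * t^μ = ∑ j ∈ Finset.range (M+1), (-1:ℝ)^j * (m.choose j : ℝ) * t^(μ+(j:ℝ)) := by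
  have hsub : ∑ j ∈ Finset.range (M+1), (-1:ℝ)^j * (m.choose j : ℝ) * t^(μ+(j:ℝ))
      = ∑ j ∈ Finset.range (m+1), (-1:ℝ)^j * (m.choose j : ℝ) * t^(μ+(j:ℝ)) := by
    symm
    apply Finset.sum_subset
    · intro x hx
      simp only [Finset.mem_range] at *
      omega
    · intro x _ hx
      simp only [Finset.mem_range, not_lt] at hx
      rw [Nat.choose_eq_zero_of_lt (by omega : m < x)]
      simp
  rw [hsub, show (1:ℝ) - t = -t + 1 by ring, add_pow, Finset.sum_mul]
  apply Finset.sum_congr rfl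
  intro j hj
  rw [Real.rpow_add ht, Real.rpow_natCast, one_pow, neg_pow]
  ring

/-- For real `μ ≥ 0`, `ν > 0`, `k ∈ ℕ` and `f ∈ L¹(𝔻, dι)`,
`∑_{i=0}^{k} C(k,i)²·(i!/(ν)_i)·∫_𝔻 f(v)|v|^{2(k−i)}(1−|v|²)^μ dι(v)
  = ∑_{j=0}^{k} (−1)^j·C(k,j)·((ν+k−j)_k/(ν)_k)·∫_𝔻 f(v)(1−|v|²)^{μ+j} dι(v)`. -/
theorem berezin_expansion_identity (μ ν : ℝ) (hμ : 0 ≤ μ) (hν : 0 < ν) (k : ℕ)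
    (f : ℂ → ℂ) (hf : Integrable f iota) :
    ∑ i ∈ Finset.range (k + 1),
        (((k.choose i : ℝ) ^ 2 * ((Nat.factorial i : ℝ) / poch ν i) : ℝ) : ℂ) *
          ∫ v, f v * ((‖v‖ ^ (2 * (k - i)) *
            (1 - ‖v‖ ^ 2) ^ μ : ℝ) : ℂ) ∂iota =
      ∑ j ∈ Finset.range (k + 1),
        (-1 : ℂ) ^ j * (k.choose j : ℂ) *
          (((poch (ν + (k : ℝ) - (j : ℝ)) k / poch ν k : ℝ)) : ℂ) *
          ∫ v, f v * (((1 - ‖v‖ ^ 2) ^ (μ + (j : ℝ)) : ℝ) : ℂ) ∂iota := by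
  have hU : MeasurableSet unitDisk := continuous_norm.measurable measurableSet_Iio
  have h0 : iota unitDiskᶜ = 0 := by
    rw [iota, withDensity_apply _ hU.compl, Measure.restrict_restrict hU.compl]
    simp [Set.compl_inter_self]
  have hae : ∀ᵐ v ∂iota, v ∈ unitDisk := by
    rw [ae_iff]
    exact h0
  -- integrability of the (1-|v|^2)^(μ+j) integrands
  have hint2 : ∀ j : ℕ, Integrable
      (fun v => f v * (((1 - ‖v‖ ^ 2) ^ (μ + (j:ℝ)) : ℝ) : ℂ)) iota := by
    intro j
    have hm : Measurable fun v : ℂ => (((1 - ‖v‖ ^ 2) ^ (μ + (j:ℝ)) : ℝ) : ℂ) :=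
      Complex.measurable_ofReal.comp
        ((measurable_const.sub (continuous_norm.measurable.pow_const 2)).pow_const _)
    apply Integrable.mono' hf.norm (hf.aestronglyMeasurable.mul hm.aestronglyMeasurable)
    filter_upwards [hae] with v hv
    have h1 : ‖v‖ < 1 := hv
    have h2 : 0 ≤ ‖v‖ := norm_nonneg _
    have ht : 0 < 1 - ‖v‖ ^ 2 := by nlinarith
    have ht1 : 1 - ‖v‖ ^ 2 ≤ 1 := by nlinarith
    simp only [Pi.mul_apply, norm_mul]
    have hb : ‖(((1 - ‖v‖ ^ 2) ^ (μ + (j:ℝ)) : ℝ) : ℂ)‖ ≤ 1 := by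
      rw [Complex.norm_real, Real.norm_eq_abs,
        _root_.abs_of_nonneg (Real.rpow_nonneg ht.le _)]
      exact Real.rpow_le_one ht.le ht1 (by positivity)
    calc ‖f v‖ * ‖(((1 - ‖v‖ ^ 2) ^ (μ + (j:ℝ)) : ℝ) : ℂ)‖
        ≤ ‖f v‖ * 1 := by gcongr
      _ = ‖f v‖ := mul_one _
  -- pointwise expansion of the left-hand integrands
  have hpt : ∀ i : ℕ, i ≤ k → (∀ᵐ v ∂iota,
      f v * ((‖v‖ ^ (2*(k-i)) * (1 - ‖v‖ ^ 2) ^ μ : ℝ) : ℂ)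
      = ∑ j ∈ Finset.range (k+1), ((((-1:ℝ))^j * (((k-i).choose j : ℕ) : ℝ) : ℝ) : ℂ) *
          (f v * (((1 - ‖v‖ ^ 2) ^ (μ + (j:ℝ)) : ℝ) : ℂ))) := by
    intro i hik
    filter_upwards [hae] with v hv
    have h1 : ‖v‖ < 1 := hv
    have h2 : 0 ≤ ‖v‖ := norm_nonneg _
    have ht : 0 < 1 - ‖v‖ ^ 2 := by nlinarith
    have hpow : ‖v‖ ^ (2*(k-i)) = (1 - (1 - ‖v‖ ^ 2))^(k-i) := by
      rw [pow_mul]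
      congr 1
      ring
    have hre := real_expand μ (k-i) k (by omega) (1 - ‖v‖ ^ 2) ht
    rw [hpow]
    have : ((( (1 - (1 - ‖v‖ ^ 2))^(k-i) * (1 - ‖v‖ ^ 2) ^ μ : ℝ)) : ℂ)
        = ∑ j ∈ Finset.range (k+1), ((((-1:ℝ))^j * (((k-i).choose j : ℕ) : ℝ) : ℝ) : ℂ) *
          ((((1 - ‖v‖ ^ 2) ^ (μ + (j:ℝ)) : ℝ)) : ℂ) := by
      rw [show ((1:ℝ) - (1 - ‖v‖ ^ 2)) = 1 - (1 - ‖v‖ ^ 2) from rfl]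
      rw [hre]
      push_cast
      apply Finset.sum_congr rfl
      intro j _
      ring
    rw [this, Finset.mul_sum]
    apply Finset.sum_congr rfl
    intro j _
    ring
  -- rewrite each integral on the left
  have hInt : ∀ i ∈ Finset.range (k+1),
      (∫ v, f v * ((‖v‖ ^ (2 * (k - i)) *
            (1 - ‖v‖ ^ 2) ^ μ : ℝ) : ℂ) ∂iota)
      = ∑ j ∈ Finset.range (k+1), ((((-1:ℝ))^j * (((k-i).choose j : ℕ) : ℝ) : ℝ) : ℂ) *
          ∫ v, f v * (((1 - ‖v‖ ^ 2) ^ (μ + (j:ℝ)) : ℝ) : ℂ) ∂iota := by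
    intro i hi
    have hik : i ≤ k := by have := Finset.mem_range.mp hi; omega
    rw [integral_congr_ae (hpt i hik)]
    rw [integral_finset_sum _ (fun j _ => ((hint2 j).const_mul _))]
    apply Finset.sum_congr rfl
    intro j _
    rw [integral_const_mul]
  rw [Finset.sum_congr rfl (fun i hi => by rw [hInt i hi])]
  rw [Finset.sum_congr rfl (fun i (hi : i ∈ Finset.range (k+1)) => Finset.mul_sum _ _ _)]
  rw [Finset.sum_comm]
  apply Finset.sum_congr rfl
  intro j hj
  have hjk : j ≤ k := by have := Finset.mem_range.mp hj; omega
  have hterm : ∀ i ∈ Finset.range (k+1),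
      (((k.choose i : ℝ) ^ 2 * ((Nat.factorial i : ℝ) / poch ν i) : ℝ) : ℂ) *
        (((((-1:ℝ))^j * (((k-i).choose j : ℕ) : ℝ) : ℝ) : ℂ) *
          ∫ v, f v * (((1 - ‖v‖ ^ 2) ^ (μ + (j:ℝ)) : ℝ) : ℂ) ∂iota)
      = ((((k.choose i : ℝ) ^ 2 * ((Nat.factorial i : ℝ) / poch ν i) *
          (((-1:ℝ))^j * (((k-i).choose j : ℕ) : ℝ)) : ℝ)) : ℂ) *
          ∫ v, f v * (((1 - ‖v‖ ^ 2) ^ (μ + (j:ℝ)) : ℝ) : ℂ) ∂iota := by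
    intro i _
    push_cast
    ring
  rw [Finset.sum_congr rfl hterm, ← Finset.sum_mul]
  congr 1
  have hs := scalar_identity ν hν k j hjk
  have : ∑ i ∈ Finset.range (k+1),
      ((((k.choose i : ℝ) ^ 2 * ((Nat.factorial i : ℝ) / poch ν i) *
          (((-1:ℝ))^j * (((k-i).choose j : ℕ) : ℝ)) : ℝ)) : ℂ)
      = ((( (-1:ℝ)^j * ((k.choose j : ℝ) * (poch (ν + k - j) k / poch ν k)) : ℝ)) : ℂ) := by
    rw [← Complex.ofReal_sum]
    congr 1
    rw [← hs, Finset.mul_sum]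
    apply Finset.sum_congr rfl
    intro i _
    ring
  rw [this]
  push_cast
  ring
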